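/- For every customizable hub labeling L of a graph G on n vertices, the average label size satisfies L_avg ≥ (1/4)·b_{2/3}, where b_{2/3} is the minimum size of a (2/3)-balanced separator of G. -/

import Mathlib

/-- `S` is an `α`-balanced separator of `G`: every connected component of
`G[V ∖ S]` has at most `α·n` vertices. -/
def IsBalancedSeparator {V : Type*} [Fintype V] (G : SimpleGraph V) (α : ℝ)
    (S : Finset V) : Prop :=
  ∀ C : (G.induce ((↑S : Set V)ᶜ)).ConnectedComponent,
    (C.supp.ncard : ℝ) ≤ α * Fintype.card V

/-- `b_α`: the minimum size of an `α`-balanced separator of `G`. -/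
noncomputable def minBalSepSize {V : Type*} [Fintype V] (G : SimpleGraph V)
    (α : ℝ) : ℕ :=
  sInf {m : ℕ | ∃ S : Finset V, IsBalancedSeparator G α S ∧ S.card = m}

/-- If there is a walk from `a` to `z` avoiding `L b` and a walk from `z` to `b`
avoiding `L a`, then the cover property fails for the pair `(a, b)`. -/
private lemma key_no_walk {V : Type*} [DecidableEq V] (G : SimpleGraph V) (L : V → Set V)
    (hcover : ∀ (s t : V) (p : G.Walk s t), p.IsPath →
      ∃ x ∈ p.support, x ∈ L s ∩ L t)
    {a b z : V} (p : G.Walk a z) (q : G.Walk z b)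
    (hp : ∀ x ∈ p.support, x ∉ L b) (hq : ∀ x ∈ q.support, x ∉ L a) : False := by
  obtain ⟨y, hy, hyab⟩ := hcover a b (p.append q).bypass ((p.append q).bypass_isPath)
  have hy' := (p.append q).support_bypass_subset hy
  rw [SimpleGraph.Walk.support_append] at hy'
  rcases List.mem_append.mp hy' with h | h
  · exact hp y h hyab.2
  · exact hq y (List.mem_of_mem_tail h) hyab.1

/-- From a connected component of `G[V ∖ S]` we extract a set `D ⊆ V` of the same
cardinality, disjoint from `S`, any two points of which are joined by a walk in `G`
avoiding `S`. -/
private lemma comp_package {V : Type*} [Fintype V] (G : SimpleGraph V) (S : Finset V)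
    (C : (G.induce ((↑S : Set V)ᶜ)).ConnectedComponent) :
    ∃ D : Set V, D.ncard = C.supp.ncard ∧ (∀ a ∈ D, a ∉ S) ∧
      ∀ a ∈ D, ∀ b ∈ D, ∃ p : G.Walk a b, ∀ y ∈ p.support, y ∉ S := by
  refine ⟨Subtype.val '' C.supp, Set.ncard_image_of_injective _ Subtype.val_injective,
    ?_, ?_⟩
  · rintro a ⟨ya, -, rfl⟩
    exact fun h => ya.2 (by simpa using h)
  · rintro a ⟨ya, hya, rfl⟩ b ⟨yb, hyb, rfl⟩
    rw [SimpleGraph.ConnectedComponent.mem_supp_iff] at hya hyb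
    have hr : (G.induce ((↑S : Set V)ᶜ)).Reachable ya yb :=
      SimpleGraph.ConnectedComponent.exact (hya.trans hyb.symm)
    obtain ⟨W⟩ := hr
    refine ⟨W.map (SimpleGraph.Embedding.induce ((↑S : Set V)ᶜ)).toHom, ?_⟩
    intro y hy
    replace hy : y ∈ W.support.map (SimpleGraph.Embedding.induce (G := G) ((↑S : Set V)ᶜ)).toHom := by
      rw [← SimpleGraph.Walk.support_map]; exact hy
    obtain ⟨yi, -, rfl⟩ := List.mem_map.mp hy
    exact fun h => yi.2 (by simpa using h)

/-- Every customizable hub labeling of `G` has average label size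
at least `(1/4)·b_{2/3}`. -/
theorem CuHL_avg_label_ge_quarter_sep {V : Type*} [Fintype V] [DecidableEq V]
    (G : SimpleGraph V) (L : V → Set V)
    (hcover : ∀ (s t : V) (p : G.Walk s t), p.IsPath →
      ∃ x ∈ p.support, x ∈ L s ∩ L t) :
    (1 / 4 : ℝ) * minBalSepSize G (2 / 3) ≤
      (∑ v : V, ((L v).ncard : ℝ)) / Fintype.card V := by
  classical
  have hself : ∀ v : V, v ∈ L v := by
    intro v
    obtain ⟨x, hx, hxL⟩ := hcover v v SimpleGraph.Walk.nil SimpleGraph.Walk.IsPath.nil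
    simp only [SimpleGraph.Walk.support_nil, List.mem_singleton] at hx
    subst hx
    exact hxL.1
  rcases Nat.eq_zero_or_pos (Fintype.card V) with h0 | hpos
  · -- empty graph
    have hV : IsEmpty V := Fintype.card_eq_zero_iff.mp h0
    have hbal : IsBalancedSeparator G (2 / 3) (∅ : Finset V) := by
      intro C
      obtain ⟨v, -⟩ := C.exists_rep
      exact (hV.false v.1).elim
    have hmin : minBalSepSize G (2 / 3) = 0 := by
      have : 0 ∈ {m : ℕ | ∃ S : Finset V, IsBalancedSeparator G (2 / 3) S ∧ S.card = m} :=
        ⟨∅, hbal, Finset.card_empty⟩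
      exact Nat.le_zero.mp (Nat.sInf_le this)
    rw [hmin]
    simp [Finset.univ_eq_empty]
  -- main case
  set n : ℕ := Fintype.card V with hn
  have hN1 : (1 : ℝ) ≤ (n : ℝ) := by exact_mod_cast hpos
  set T : ℝ := ∑ v : V, ((L v).ncard : ℝ) with hT
  set k : ℝ := T / n with hk
  have hterm1 : ∀ v : V, (1 : ℝ) ≤ ((L v).ncard : ℝ) := by
    intro v
    have : 0 < (L v).ncard := (Set.ncard_pos (Set.toFinite _)).mpr ⟨v, hself v⟩
    exact_mod_cast this
  have hTn : (n : ℝ) ≤ T := by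
    calc (n : ℝ) = ∑ _v : V, (1 : ℝ) := by simp [hn]
    _ ≤ T := Finset.sum_le_sum fun v _ => hterm1 v
  have hnpos : (0 : ℝ) < (n : ℝ) := lt_of_lt_of_le one_pos hN1
  have hk1 : (1 : ℝ) ≤ k := (le_div_iff₀ hnpos).mpr (by linarith)
  have hkpos : (0 : ℝ) < k := lt_of_lt_of_le one_pos hk1
  have hnk : (n : ℝ) * k = T := by
    rw [hk]; field_simp
  have hVne : Nonempty V := Fintype.card_pos_iff.mp hpos
  -- a vertex with label size at most the average
  have hu : ∃ u : V, ((L u).ncard : ℝ) ≤ k := by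
    by_contra h
    push_neg at h
    have : (∑ _v : V, k) < T := by
      rw [hT]
      exact Finset.sum_lt_sum_of_nonempty Finset.univ_nonempty fun v _ => h v
    rw [Finset.sum_const, Finset.card_univ, ← hn, nsmul_eq_mul, hnk] at this
    exact lt_irrefl _ this
  obtain ⟨u, hu⟩ := hu
  -- the set of vertices with label size at most 3k
  set A : Finset V := Finset.univ.filter (fun w => ((L w).ncard : ℝ) ≤ 3 * k) with hA
  have hAcard : (2 / 3 : ℝ) * n ≤ A.card := by
    set B : Finset V := Finset.univ.filter (fun w => ¬ ((L w).ncard : ℝ) ≤ 3 * k) with hB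
    have hsplit : A.card + B.card = n := by
      rw [hA, hB, Finset.card_filter_add_card_filter_not, Finset.card_univ]
    have hBsum : (3 * k) * B.card ≤ ∑ w ∈ B, ((L w).ncard : ℝ) := by
      calc (3 * k) * B.card = ∑ _w ∈ B, 3 * k := by rw [Finset.sum_const, nsmul_eq_mul]; ring
      _ ≤ ∑ w ∈ B, ((L w).ncard : ℝ) := Finset.sum_le_sum fun w hw =>
          le_of_lt (by simpa [hB] using (Finset.mem_filter.mp hw).2 : 3 * k < ((L w).ncard : ℝ))
    have hBT : ∑ w ∈ B, ((L w).ncard : ℝ) ≤ T := by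
      rw [hT]
      exact Finset.sum_le_sum_of_subset_of_nonneg (Finset.subset_univ B)
        (fun v _ _ => Nat.cast_nonneg _)
    have hBle : (B.card : ℝ) ≤ n / 3 := by
      have h3k : (3 * k) * B.card ≤ n * k := by rw [hnk]; linarith
      have : (3 : ℝ) * B.card ≤ n := by
        have := le_of_mul_le_mul_right (by linarith [h3k] : (3 * (B.card : ℝ)) * k ≤ (n : ℝ) * k) hkpos
        linarith
      linarith
    have : (A.card : ℝ) = n - B.card := by
      have := hsplit
      push_cast [← this]
      ring
    rw [this]
    linarith
  have hApos : A.Nonempty := by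
    rw [← Finset.card_pos]
    have h0 : (0 : ℝ) < A.card := lt_of_lt_of_le (by nlinarith) hAcard
    exact_mod_cast h0
  -- Main claim: some w ∈ A makes L(u) ∪ L(w) a balanced separator
  have hexists : ∃ w ∈ A,
      IsBalancedSeparator G (2 / 3) ((L u).toFinset ∪ (L w).toFinset) := by
    by_contra hcon
    push_neg at hcon
    -- for each w ∈ A, choose a big component avoiding L u ∪ L w
    have h2 : ∀ w : V, ∃ D : Set V, w ∈ A →
        ((2 / 3 : ℝ) * n < D.ncard ∧ (∀ a ∈ D, a ∉ L u ∧ a ∉ L w) ∧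
          ∀ a ∈ D, ∀ b ∈ D, ∃ p : G.Walk a b, ∀ y ∈ p.support,
            y ∉ L u ∧ y ∉ L w) := by
      intro w
      by_cases hw : w ∈ A
      · have hnb := hcon w hw
        unfold IsBalancedSeparator at hnb
        push_neg at hnb
        obtain ⟨C, hC⟩ := hnb
        obtain ⟨D, hD1, hD2, hD3⟩ :=
          comp_package G ((L u).toFinset ∪ (L w).toFinset) C
        refine ⟨D, fun _ => ⟨?_, ?_, ?_⟩⟩
        · rw [hD1, hn]
          exact_mod_cast hC
        · intro a ha
          have := hD2 a ha
          simp only [Finset.mem_union, Set.mem_toFinset] at this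
          exact ⟨fun h => this (Or.inl h), fun h => this (Or.inr h)⟩
        · intro a ha b hb
          obtain ⟨p, hp⟩ := hD3 a ha b hb
          refine ⟨p, fun y hy => ?_⟩
          have := hp y hy
          simp only [Finset.mem_union, Set.mem_toFinset] at this
          exact ⟨fun h => this (Or.inl h), fun h => this (Or.inr h)⟩
      · exact ⟨∅, fun h => absurd h hw⟩
    choose Df hDf using h2
    set Dfin : V → Finset V := fun w => (Df w).toFinset with hDfin
    have hDmem : ∀ w x : V, x ∈ Dfin w ↔ x ∈ Df w := fun w x => Set.mem_toFinset
    have hDcard : ∀ w ∈ A, (2 / 3 : ℝ) * n < ((Dfin w).card : ℝ) := by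
      intro w hw
      have := (hDf w hw).1
      rwa [Set.ncard_eq_toFinset_card'] at this
    have hself' : ∀ w ∈ A, w ∉ Dfin w := fun w hw h =>
      ((hDf w hw).2.1 w ((hDmem w w).mp h)).2 (hself w)
    -- asymmetry via the covering property
    have hasym : ∀ w ∈ A, ∀ x ∈ A, x ∈ Dfin w → w ∈ Dfin x → False := by
      intro w hw x hx hxw hwx
      have hinter : (Df w ∩ Df x).Nonempty := by
        rw [Set.nonempty_iff_ne_empty]
        intro hemp
        have h1 := (hDf w hw).1
        have h2 := (hDf x hx).1
        have hun : ((Df w ∪ Df x).ncard : ℝ) ≤ n := by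
          have hle := Set.ncard_le_ncard (Set.subset_univ (Df w ∪ Df x))
            (Set.toFinite _)
          rw [Set.ncard_univ, Nat.card_eq_fintype_card, ← hn] at hle
          exact_mod_cast hle
        have hie := Set.ncard_inter_add_ncard_union (Df w) (Df x)
          (Set.toFinite _) (Set.toFinite _)
        rw [hemp, Set.ncard_empty, zero_add] at hie
        have : ((Df w).ncard : ℝ) + ((Df x).ncard : ℝ) ≤ (n : ℝ) := by
          rw [← Nat.cast_add, ← hie]
          exact hun
        nlinarith
      obtain ⟨z, hzw, hzx⟩ := hinter
      obtain ⟨p, hp⟩ := (hDf w hw).2.2 x ((hDmem w x).mp hxw) z hzw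
      obtain ⟨q, hq⟩ := (hDf x hx).2.2 z hzx w ((hDmem x w).mp hwx)
      exact key_no_walk G L hcover p q (fun y hy => (hp y hy).2)
        (fun y hy => (hq y hy).2)
    -- double counting
    set s : Finset (V × V) :=
      A.biUnion (fun w => (A.filter (fun x => x ∈ Dfin w)).image
        (fun x => (w, x))) with hs
    have hmem : ∀ p : V × V, p ∈ s ↔ p.1 ∈ A ∧ p.2 ∈ A ∧ p.2 ∈ Dfin p.1 := by
      intro p
      simp only [hs, Finset.mem_biUnion, Finset.mem_image, Finset.mem_filter]
      constructor
      · rintro ⟨w, hw, x, ⟨hx, hdx⟩, rfl⟩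
        exact ⟨hw, hx, hdx⟩
      · rintro ⟨h1, h2, h3⟩
        exact ⟨p.1, h1, p.2, ⟨h2, h3⟩, rfl⟩
    have hscard : s.card = ∑ w ∈ A, (A.filter (fun x => x ∈ Dfin w)).card := by
      rw [hs, Finset.card_biUnion]
      · exact Finset.sum_congr rfl fun w _ =>
          Finset.card_image_of_injective _ (fun a b h => (Prod.ext_iff.mp h).2)
      · intro w _ w' _ hne
        rw [Function.onFun, Finset.disjoint_left]
        intro p hp hp'
        obtain ⟨_, _, rfl⟩ := Finset.mem_image.mp hp
        obtain ⟨_, _, heq⟩ := Finset.mem_image.mp hp'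
        exact hne ((Prod.ext_iff.mp heq).1.symm)
    have hsub : s ⊆ A.offDiag := by
      intro p hp
      obtain ⟨h1, h2, h3⟩ := (hmem p).mp hp
      exact Finset.mem_offDiag.mpr ⟨h1, h2, fun heq => hself' p.2 h2 (heq ▸ h3)⟩
    have hswapmem : ∀ p : V × V, p ∈ s.image Prod.swap ↔ p.swap ∈ s := by
      intro p
      constructor
      · intro h
        obtain ⟨q, hq, rfl⟩ := Finset.mem_image.mp h
        simpa using hq
      · intro h
        exact Finset.mem_image.mpr ⟨p.swap, h, Prod.swap_swap p⟩
    have hdisj : Disjoint s (s.image Prod.swap) := by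
      rw [Finset.disjoint_left]
      intro p hp hp'
      obtain ⟨h1, h2, h3⟩ := (hmem p).mp hp
      have h4 := (hmem p.swap).mp ((hswapmem p).mp hp')
      simp only [Prod.fst_swap, Prod.snd_swap] at h4
      exact hasym p.1 h1 p.2 h2 h3 h4.2.2
    have hsubswap : s.image Prod.swap ⊆ A.offDiag := by
      intro p hp
      have h := (hmem p.swap).mp ((hswapmem p).mp hp)
      simp only [Prod.fst_swap, Prod.snd_swap] at h
      exact Finset.mem_offDiag.mpr ⟨h.2.1, h.1, fun heq =>
        hself' p.2 h.1 (heq ▸ h.2.2)⟩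
    have h2s : 2 * s.card + A.card ≤ A.card * A.card := by
      have hc := Finset.card_le_card (Finset.union_subset hsub hsubswap)
      rw [Finset.card_union_of_disjoint hdisj,
        Finset.card_image_of_injective _ Prod.swap_injective,
        Finset.offDiag_card] at hc
      have hb : A.card ≤ A.card * A.card :=
        Nat.le_mul_of_pos_left _ (Finset.card_pos.mpr hApos)
      omega
    -- lower bound on each fiber
    have hfiber : ∀ w ∈ A,
        (A.card : ℝ) + (2 / 3 : ℝ) * n - n <
          ((A.filter (fun x => x ∈ Dfin w)).card : ℝ) := by
      intro w hw
      have h1 : A.card + (Dfin w).card ≤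
          (A.filter (fun x => x ∈ Dfin w)).card + n := by
        have hie := Finset.card_inter_add_card_union A (Dfin w)
        have h2 : (A ∪ Dfin w).card ≤ n := by
          rw [hn, ← Finset.card_univ]
          exact Finset.card_le_univ _
        rw [Finset.filter_mem_eq_inter]
        omega
      have h3 := hDcard w hw
      have h4 := (Nat.cast_le (α := ℝ)).mpr h1
      push_cast at h4
      linarith
    have hsumlb : (A.card : ℝ) * ((A.card : ℝ) + (2 / 3 : ℝ) * n - n) <
        (s.card : ℝ) := by
      have hlt := Finset.sum_lt_sum_of_nonempty hApos hfiber
      rw [Finset.sum_const, nsmul_eq_mul] at hlt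
      rw [hscard]
      push_cast
      exact hlt
    -- final arithmetic contradiction
    have h2sR : 2 * (s.card : ℝ) + (A.card : ℝ) ≤ (A.card : ℝ) * A.card := by
      exact_mod_cast h2s
    have hapos : (0 : ℝ) < A.card := lt_of_lt_of_le (by nlinarith) hAcard
    nlinarith [mul_le_mul_of_nonneg_right hAcard (le_of_lt hapos)]
  -- conclude
  obtain ⟨w, hwA, hbal⟩ := hexists
  set S0 : Finset V := (L u).toFinset ∪ (L w).toFinset with hS0
  have hmin : minBalSepSize G (2 / 3) ≤ S0.card := Nat.sInf_le ⟨S0, hbal, rfl⟩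
  have hScard : (S0.card : ℝ) ≤ 4 * k := by
    have h1 : S0.card ≤ (L u).toFinset.card + (L w).toFinset.card :=
      Finset.card_union_le _ _
    have h2 : ((L u).toFinset.card : ℝ) ≤ k := by
      rw [← Set.ncard_eq_toFinset_card']
      exact hu
    have h3 : ((L w).toFinset.card : ℝ) ≤ 3 * k := by
      rw [← Set.ncard_eq_toFinset_card']
      exact (Finset.mem_filter.mp hwA).2
    have h4 := (Nat.cast_le (α := ℝ)).mpr h1
    push_cast at h4
    linarith
  have hfin : ((minBalSepSize G (2 / 3) : ℝ)) ≤ 4 * k := by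
    have := (Nat.cast_le (α := ℝ)).mpr hmin
    linarith
  have : (1 / 4 : ℝ) * minBalSepSize G (2 / 3) ≤ k := by linarith
  exact this
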